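/- arXiv:1510.04820 — 5 statements merged into one kernel-verified Lean document; each statement's English description precedes it below -/
import Mathlib

section
/- The minimum possible codebook size of a valid functional index code for a functional index coding problem F(X,R) equals the chromatic number χ(C(F)) of its confusion graph: every valid functional index code has at least χ(C(F)) distinct codewords, and there exists a valid functional index code with exactly χ(C(F)) codewords. -/
/-!
Two confusable messages must be sent to different codewords, so the encoder of a valid code is a
proper colouring of the confusion graph. Conversely, every proper colouring is the encoder of a
valid code: receiver `i` outputs the demand of any message that has the received codeword and its
side information, and this is the right demand because no two such messages are confusable.
-/

namespace SimpleGraph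

variable {V α : Type*} [Finite V] {G : SimpleGraph V}

theorem Coloring.chromaticNumber_le_ncard_range (C : G.Coloring α) :
    G.chromaticNumber ≤ (Set.range C).ncard := by
  have : Fintype (Set.range C) := (Set.finite_range C).fintype
  let C' : G.Coloring (Set.range C) :=
    Coloring.mk (Set.rangeFactorization C) fun hadj heq => C.valid hadj (congrArg Subtype.val heq)
  rw [← Nat.card_coe_set_eq, Nat.card_eq_fintype_card]
  exact C'.colorable.chromaticNumber_le

theorem exists_coloring_ncard_range_eq_chromaticNumber (G : SimpleGraph V) :
    ∃ (α : Type) (C : G.Coloring α), ((Set.range C).ncard : ℕ∞) = G.chromaticNumber := by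
  have hG : G.Colorable G.chromaticNumber.toNat := G.colorable_chromaticNumber_of_fintype
  have hχ : G.chromaticNumber = G.chromaticNumber.toNat :=
    (ENat.natCast_toNat (chromaticNumber_ne_top_iff_exists.2 ⟨_, hG⟩)).symm
  obtain ⟨C⟩ := hG
  have hC : Function.Surjective C := (chromaticNumber_eq_iff_forall_surjective ⟨C⟩).1 hχ C
  refine ⟨_, C, ?_⟩
  rw [hC.range_eq, Set.ncard_univ, Nat.card_eq_fintype_card, Fintype.card_fin, ← hχ]

end SimpleGraph

section FunctionalIndexCoding

variable {V B ι : Type*} {S T : ι → Type*} (h : ∀ i, V → S i) (w : ∀ i, V → T i)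

def IsConfusable (x y : V) : Prop :=
  ∃ i, h i x = h i y ∧ w i x ≠ w i y

variable {h w}

theorem IsConfusable.ne {x y : V} (hxy : IsConfusable h w x y) : x ≠ y := by
  rintro rfl
  obtain ⟨i, -, hw⟩ := hxy
  exact hw rfl

theorem IsConfusable.encode_ne {M : V → B} {D : ∀ i, B → S i → T i}
    (hD : ∀ i x, D i (M x) (h i x) = w i x) {x y : V} (hxy : IsConfusable h w x y) :
    M x ≠ M y := by
  obtain ⟨i, hh, hw⟩ := hxy
  intro hM
  exact hw (by rw [← hD i x, ← hD i y, hM, hh])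

variable (h w)

noncomputable def consistentDecoder [Nonempty V] (M : V → B) (i : ι) (b : B) (s : S i) : T i :=
  w i (Classical.epsilon fun x => M x = b ∧ h i x = s)

theorem consistentDecoder_encode [Nonempty V] {M : V → B}
    (hM : ∀ x y, IsConfusable h w x y → M x ≠ M y) (i : ι) (x : V) :
    consistentDecoder h w M i (M x) (h i x) = w i x := by
  obtain ⟨hMy, hhy⟩ :=
    Classical.epsilon_spec (p := fun y => M y = M x ∧ h i y = h i x) ⟨x, rfl, rfl⟩
  by_contra hw
  exact hM _ _ ⟨i, hhy, hw⟩ hMy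

end FunctionalIndexCoding

/-- The minimum possible codebook size of a valid functional index code equals the chromatic
number of the confusion graph. -/
theorem stmt_3 {F : Type} [Field F] [Fintype F]
    (n K N : ℕ) (hsz wsz : Fin N → ℕ)
    (H : ∀ i, Fin (hsz i) → (Fin (n * K) → F) → Fin n → F)
    (W : ∀ i, Fin (wsz i) → (Fin (n * K) → F) → Fin n → F)
    (G : SimpleGraph (Fin (n * K) → F))
    (hG : ∀ x x', G.Adj x x' ↔
      x ≠ x' ∧ ∃ i, (∀ j, H i j x = H i j x') ∧ ∃ l, W i l x ≠ W i l x') :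
    (∀ (B : Type) (M : (Fin (n * K) → F) → B)
        (D : ∀ i, B → (Fin (hsz i) → Fin n → F) → Fin (wsz i) → Fin n → F),
        (∀ i x, D i (M x) (fun j => H i j x) = fun l => W i l x) →
        G.chromaticNumber ≤ ((Set.range M).ncard : ℕ∞))
    ∧ ∃ (B : Type) (M : (Fin (n * K) → F) → B)
        (D : ∀ i, B → (Fin (hsz i) → Fin n → F) → Fin (wsz i) → Fin n → F),
        (∀ i x, D i (M x) (fun j => H i j x) = fun l => W i l x) ∧
        ((Set.range M).ncard : ℕ∞) = G.chromaticNumber := by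
  let h i x := fun j => H i j x
  let w i x := fun l => W i l x
  have hadj : ∀ x y, G.Adj x y ↔ IsConfusable h w x y := fun x y => by
    have hconf : IsConfusable h w x y ↔ ∃ i, (∀ j, H i j x = H i j y) ∧ ∃ l, W i l x ≠ W i l y :=
      exists_congr fun _ => and_congr funext_iff Function.ne_iff
    rw [hG, ← hconf]
    exact ⟨And.right, fun hxy => ⟨hxy.ne, hxy⟩⟩
  constructor
  · intro B M D hD
    exact (SimpleGraph.Coloring.mk M fun hxy =>
      ((hadj _ _).1 hxy).encode_ne hD).chromaticNumber_le_ncard_range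
  · obtain ⟨α, C, hC⟩ := G.exists_coloring_ncard_range_eq_chromaticNumber
    exact ⟨α, C, consistentDecoder h w C,
      consistentDecoder_encode h w fun x y hxy => C.valid ((hadj x y).2 hxy), hC⟩
end

section
/- Lemma 2: For a linear functional index coding problem (all Has- and Want-functions of all N receivers are F_q-linear, with matrices M_{H_i}, M_{W_i}), the confusion graph of the problem is the Cayley graph of the additive group (F_q^{nK}, +) with connection set S = ∪_{i∈[N]} S_i, where S_i = {s ∈ F_q^{nK} : sM_{H_i} = 0 and sM_{W_i} ≠ 0}. Consequently the confusion graph is vertex-transitive and regular. -/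
/-!
By linearity, whether `x` and `x'` are confusable depends only on `x - x'`, so the confusion graph
is the Cayley graph of `(F_q^{nK}, +)` on the set of confusable differences. Translations are
automorphisms of any Cayley graph of a group and act transitively on it, and automorphisms
preserve the number of neighbours.
-/

open Matrix

namespace SimpleGraph

variable {V W : Type*}

theorem Iso.ncard_neighborSet_eq {G : SimpleGraph V} {G' : SimpleGraph W} (f : G ≃g G') (v : V) :
    (G'.neighborSet (f v)).ncard = (G.neighborSet v).ncard := by
  rw [← Nat.card_coe_set_eq, ← Nat.card_coe_set_eq, Nat.card_congr (f.mapNeighborSet v)]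

theorem ncard_neighborSet_eq_of_forall_exists_iso {G : SimpleGraph V}
    (hG : ∀ x y, ∃ φ : G ≃g G, φ x = y) (u v : V) :
    (G.neighborSet u).ncard = (G.neighborSet v).ncard := by
  obtain ⟨φ, rfl⟩ := hG v u
  exact φ.ncard_neighborSet_eq v

theorem exists_addCayley_iso_apply_eq [AddGroup V] (s : Set V) (x y : V) :
    ∃ φ : addCayley s ≃g addCayley s, φ x = y :=
  ⟨⟨Equiv.addLeft (y - x), addCayley_adj_add_iff_right⟩, sub_add_cancel y x⟩

theorem eq_addCayley_of_adj_iff_sub_mem [AddCommGroup V] {G : SimpleGraph V} {s : Set V}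
    (hG : ∀ x y, G.Adj x y ↔ x - y ∈ s) : G = addCayley s := by
  ext x y
  rw [addCayley_adj, ← sub_eq_neg_add, ← sub_eq_neg_add, ← hG, ← hG, G.adj_comm y x, or_self]
  exact ⟨fun h => ⟨h.ne, h⟩, And.right⟩

end SimpleGraph

theorem vecMul_eq_and_vecMul_ne_iff_sub {R m n p : Type*} [Ring R] [Fintype m]
    (A : Matrix m n R) (B : Matrix m p R) (x y : m → R) :
    (x ᵥ* A = y ᵥ* A ∧ x ᵥ* B ≠ y ᵥ* B) ↔ ((x - y) ᵥ* A = 0 ∧ (x - y) ᵥ* B ≠ 0) := by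
  simp only [sub_vecMul, sub_eq_zero, sub_ne_zero]

theorem stmt_8_general {F : Type*} [Field F]
    (n K N : ℕ) (hc wc : Fin N → ℕ)
    (MH : ∀ i, Matrix (Fin (n * K)) (Fin (hc i)) F)
    (MW : ∀ i, Matrix (Fin (n * K)) (Fin (wc i)) F)
    (G : SimpleGraph (Fin (n * K) → F))
    (hG : ∀ x x', G.Adj x x' ↔
      x ≠ x' ∧ ∃ i, x ᵥ* MH i = x' ᵥ* MH i ∧ x ᵥ* MW i ≠ x' ᵥ* MW i) :
    (∀ x x', G.Adj x x' ↔
      x - x' ∈ ⋃ i, {s : Fin (n * K) → F | s ᵥ* MH i = 0 ∧ s ᵥ* MW i ≠ 0})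
    ∧ (∀ x y : Fin (n * K) → F, ∃ φ : G ≃g G, φ x = y)
    ∧ (∃ d : ℕ, ∀ v : Fin (n * K) → F, (G.neighborSet v).ncard = d) := by
  have hcayley : ∀ x x', G.Adj x x' ↔
      x - x' ∈ ⋃ i, {s : Fin (n * K) → F | s ᵥ* MH i = 0 ∧ s ᵥ* MW i ≠ 0} := by
    intro x x'
    simp only [hG, Set.mem_iUnion, Set.mem_ofPred_eq, ← vecMul_eq_and_vecMul_ne_iff_sub]
    exact ⟨And.right, fun ⟨i, hi⟩ => ⟨fun h => hi.2 (h ▸ rfl), i, hi⟩⟩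
  have htrans : ∀ x y : Fin (n * K) → F, ∃ φ : G ≃g G, φ x = y := by
    rw [SimpleGraph.eq_addCayley_of_adj_iff_sub_mem hcayley]
    exact SimpleGraph.exists_addCayley_iso_apply_eq _
  exact ⟨hcayley, htrans, _,
    fun v => SimpleGraph.ncard_neighborSet_eq_of_forall_exists_iso htrans v 0⟩

/-- Lemma 2: for a linear FICP the confusion graph is the Cayley graph of `(F_q^{nK}, +)` with
connection set `⋃ i, S_i`, hence vertex-transitive and regular. -/
theorem stmt_8 {F : Type*} [Field F] [Fintype F]
    (n K N : ℕ) (hc wc : Fin N → ℕ)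
    (MH : ∀ i, Matrix (Fin (n * K)) (Fin (hc i)) F)
    (MW : ∀ i, Matrix (Fin (n * K)) (Fin (wc i)) F)
    (G : SimpleGraph (Fin (n * K) → F))
    (hG : ∀ x x', G.Adj x x' ↔
      x ≠ x' ∧ ∃ i, x ᵥ* MH i = x' ᵥ* MH i ∧ x ᵥ* MW i ≠ x' ᵥ* MW i) :
    (∀ x x', G.Adj x x' ↔
      x - x' ∈ ⋃ i, {s : Fin (n * K) → F | s ᵥ* MH i = 0 ∧ s ᵥ* MW i ≠ 0})
    ∧ (∀ x y : Fin (n * K) → F, ∃ φ : G ≃g G, φ x = y)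
    ∧ (∃ d : ℕ, ∀ v : Fin (n * K) → F, (G.neighborSet v).ncard = d) :=
  stmt_8_general n K N hc wc MH MW G hG
end

section
/- Corollary 1: Let C be the confusion graph, for scalar messages (block length 1), of a linear functional index coding problem over F_q with K messages (so C is vertex-transitive with q^K vertices). Then for block length n, the size |B| = χ(C^n) of an optimal codebook satisfies (q^K / α(C))^n ≤ |B| ≤ (q^K / α(C))^n · (1 + n·log α(C)), where α(C) is the independence number of C. -/
open Matrix

/-- The `n`-fold OR (co-normal) power of a simple graph. -/
def orPow {V : Type*} (G : SimpleGraph V) (n : ℕ) : SimpleGraph (Fin n → V) where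
  Adj u v := u ≠ v ∧ ∃ j, G.Adj (u j) (v j)
  symm := by
    constructor
    rintro u v ⟨hne, j, hadj⟩
    exact ⟨hne.symm, j, hadj.symm⟩
  loopless := by
    constructor
    rintro u ⟨hne, -⟩
    exact hne rfl

/-- The independence number of a simple graph. -/
noncomputable def indepNum {V : Type*} (G : SimpleGraph V) : ℕ :=
  sSup {k : ℕ | ∃ s : Finset V, s.card = k ∧ ∀ u ∈ s, ∀ v ∈ s, ¬ G.Adj u v}



noncomputable def Hm (k : ℕ) : ℝ := ∑ j ∈ Finset.range k, (1:ℝ)/(j+1)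

lemma Hm_nonneg (k : ℕ) : 0 ≤ Hm k := by
  unfold Hm; positivity

lemma Hm_diff {b c k : ℕ} (hcb : c ≤ b) (hbk : b ≤ k) (hk : 0 < k) :
    ((b:ℝ) - c)/k ≤ Hm b - Hm c := by
  have h1 : Hm b - Hm c = ∑ j ∈ Finset.Ico c b, (1:ℝ)/(j+1) := by
    unfold Hm
    rw [Finset.range_eq_Ico,
      ← Finset.sum_Ico_consecutive (fun j : ℕ => (1:ℝ)/(j+1)) (Nat.zero_le c) hcb]
    rw [Finset.range_eq_Ico]
    ring
  rw [h1]
  have h2 : ∀ j ∈ Finset.Ico c b, (1:ℝ)/k ≤ 1/(j+1) := by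
    intro j hj
    have hj' := (Finset.mem_Ico.1 hj).2
    apply one_div_le_one_div_of_le
    · positivity
    · have : (j:ℝ) + 1 ≤ b := by exact_mod_cast hj'
      exact this.trans (by exact_mod_cast hbk)
  calc ((b:ℝ) - c)/k = (Finset.Ico c b).card * ((1:ℝ)/k) := by
        rw [Nat.card_Ico, Nat.cast_sub hcb]; ring
    _ ≤ ∑ j ∈ Finset.Ico c b, (1:ℝ)/(j+1) := by
        have := Finset.sum_le_sum h2
        simpa using this

lemma Hm_le_log {s : ℕ} (hs : 1 ≤ s) : Hm s ≤ 1 + Real.log s := by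
  induction s with
  | zero => omega
  | succ m ih =>
    rcases Nat.eq_or_lt_of_le hs with h | h
    · simp [← h, Hm, Finset.sum_range_one]
    · have hm : 1 ≤ m := by omega
      have ihm := ih hm
      have hstep : Hm (m+1) = Hm m + 1/((m:ℝ)+1) := by
        simp [Hm, Finset.sum_range_succ]
      have hlog : Real.log m + 1/((m:ℝ)+1) ≤ Real.log ((m:ℝ)+1) := by
        have hmpos : (0:ℝ) < m := by exact_mod_cast hm
        have h2 : Real.log ((m:ℝ)/((m:ℝ)+1)) ≤ (m:ℝ)/((m:ℝ)+1) - 1 :=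
          Real.log_le_sub_one_of_pos (by positivity)
        rw [Real.log_div (ne_of_gt hmpos) (by positivity)] at h2
        have : (m:ℝ)/((m:ℝ)+1) - 1 = -(1/((m:ℝ)+1)) := by field_simp; ring
        rw [this] at h2
        linarith
      have hc : ((m+1 : ℕ):ℝ) = (m:ℝ)+1 := by push_cast; ring
      rw [hc]
      linarith

section cover
variable {W : Type*} [Fintype W] [AddCommGroup W] [DecidableEq W]

lemma double_count (S U : Finset W) :
    ∑ g : W, (U ∩ S.image (g + ·)).card = U.card * S.card := by
  have key : ∀ x : W, (Finset.univ.filter (fun g : W => x ∈ S.image (g + ·))) =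
      S.image (fun s => x - s) := by
    intro x
    ext g
    simp only [Finset.mem_filter, Finset.mem_univ, true_and, Finset.mem_image]
    constructor
    · rintro ⟨s, hs, hgs⟩; exact ⟨s, hs, by rw [← hgs]; abel⟩
    · rintro ⟨s, hs, hgs⟩; exact ⟨s, hs, by rw [← hgs]; abel⟩
  calc ∑ g : W, (U ∩ S.image (g + ·)).card
      = ∑ g : W, ∑ x ∈ U, if x ∈ S.image (g + ·) then 1 else 0 := by
        refine Finset.sum_congr rfl fun g _ => ?_
        rw [← Finset.filter_mem_eq_inter]
        exact Finset.card_filter _ _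
    _ = ∑ x ∈ U, ∑ g : W, if x ∈ S.image (g + ·) then 1 else 0 := Finset.sum_comm
    _ = ∑ x ∈ U, (Finset.univ.filter (fun g : W => x ∈ S.image (g + ·))).card := by
        refine Finset.sum_congr rfl fun x _ => ?_
        rw [Finset.card_filter]
    _ = ∑ x ∈ U, S.card := by
        refine Finset.sum_congr rfl fun x _ => ?_
        rw [key x, Finset.card_image_of_injective _ (fun a b h => by
          rw [← sub_sub_cancel x a, h, sub_sub_cancel])]
    _ = U.card * S.card := by rw [Finset.sum_const, smul_eq_mul]

lemma cover_aux (H : SimpleGraph W)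
    (hinv : ∀ g u v : W, H.Adj (u + g) (v + g) → H.Adj u v)
    (S : Finset W) (hSne : S.Nonempty)
    (hSind : ∀ u ∈ S, ∀ v ∈ S, ¬ H.Adj u v) :
    ∀ (U : Finset W), ∃ (t : ℕ) (col : W → ℕ),
      (∀ x ∈ U, col x < t) ∧
      (∀ x ∈ U, ∀ y ∈ U, H.Adj x y → col x ≠ col y) ∧
      (t : ℝ) ≤ (∑ g : W, Hm ((U ∩ S.image (g + ·)).card)) / S.card := by
  intro U
  induction U using Finset.strongInduction with
  | _ U ih =>
  rcases U.eq_empty_or_nonempty with rfl | hUne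
  · refine ⟨0, fun _ => 0, by simp, by simp, ?_⟩
    push_cast
    apply div_nonneg (Finset.sum_nonneg fun g _ => Hm_nonneg _) (Nat.cast_nonneg _)
  have hspos : 0 < S.card := Finset.card_pos.2 hSne
  -- pick the best translate
  obtain ⟨g0, -, hg0⟩ := Finset.exists_max_image Finset.univ
    (fun g : W => (U ∩ S.image (g + ·)).card) ⟨Classical.arbitrary W, Finset.mem_univ _⟩
  set k := (U ∩ S.image (g0 + ·)).card with hk
  have hsum : ∑ g : W, (U ∩ S.image (g + ·)).card = U.card * S.card := double_count S U
  have hkpos : 0 < k := by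
    by_contra hk0
    push_neg at hk0
    have : ∀ g : W, (U ∩ S.image (g + ·)).card = 0 := fun g =>
      Nat.le_zero.1 ((hg0 g (Finset.mem_univ g)).trans hk0)
    have : U.card * S.card = 0 := by rw [← hsum]; exact Finset.sum_eq_zero fun g _ => this g
    have := Nat.mul_eq_zero.mp this
    rcases this with h | h
    · exact absurd h (Finset.card_ne_zero_of_mem hUne.choose_spec)
    · omega
  set T := S.image (g0 + ·) with hT
  set U' := U \ T with hU'
  have hUT : U ∩ T ⊆ U := Finset.inter_subset_left
  have hU'card : U'.card = U.card - k := by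
    rw [hU', hk]
    rw [← Finset.sdiff_inter_self_left U T]
    exact Finset.card_sdiff_of_subset Finset.inter_subset_left
  have hkle : k ≤ U.card := by rw [hk]; exact Finset.card_le_card Finset.inter_subset_left
  obtain ⟨x0, hx0⟩ := Finset.card_pos.1 hkpos
  have hU'lt : U' ⊂ U := by
    refine (Finset.ssubset_iff_of_subset Finset.sdiff_subset).2 ?_
    refine ⟨x0, (Finset.mem_inter.1 hx0).1, ?_⟩
    intro hmem
    exact (Finset.mem_sdiff.1 hmem).2 (Finset.mem_inter.1 hx0).2
  obtain ⟨t', col', hlt', hadj', hpot'⟩ := ih U' hU'lt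
  refine ⟨t' + 1, fun x => if x ∈ U ∩ T then t' else col' x, ?_, ?_, ?_⟩
  · intro x hx
    by_cases hxT : x ∈ U ∩ T
    · simp [hxT]
    · have hxU' : x ∈ U' := by
        rw [hU', Finset.mem_sdiff]
        exact ⟨hx, fun h => hxT (Finset.mem_inter.2 ⟨hx, h⟩)⟩
      simp only [hxT, if_neg, if_false]
      exact (hlt' x hxU').trans (Nat.lt_succ_self t')
  · intro x hxU y hyU hadj
    by_cases hxT : x ∈ U ∩ T <;> by_cases hyT : y ∈ U ∩ T
    · -- both in translate: contradiction with independence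
      exfalso
      obtain ⟨sx, hsx, hsxe⟩ := Finset.mem_image.1 (Finset.mem_inter.1 hxT).2
      obtain ⟨sy, hsy, hsye⟩ := Finset.mem_image.1 (Finset.mem_inter.1 hyT).2
      apply hSind sx hsx sy hsy
      apply hinv g0
      rw [add_comm sx g0, add_comm sy g0, hsxe, hsye]
      exact hadj
    · have hyU' : y ∈ U' := by
        rw [hU', Finset.mem_sdiff]
        exact ⟨hyU, fun h => hyT (Finset.mem_inter.2 ⟨hyU, h⟩)⟩
      simp only [hxT, hyT, if_pos, if_neg, if_false]
      exact (hlt' y hyU').ne'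
    · have hxU' : x ∈ U' := by
        rw [hU', Finset.mem_sdiff]
        exact ⟨hxU, fun h => hxT (Finset.mem_inter.2 ⟨hxU, h⟩)⟩
      simp only [hxT, hyT, if_pos, if_neg, if_false]
      exact (hlt' x hxU').ne
    · have hxU' : x ∈ U' := by
        rw [hU', Finset.mem_sdiff]
        exact ⟨hxU, fun h => hxT (Finset.mem_inter.2 ⟨hxU, h⟩)⟩
      have hyU' : y ∈ U' := by
        rw [hU', Finset.mem_sdiff]
        exact ⟨hyU, fun h => hyT (Finset.mem_inter.2 ⟨hyU, h⟩)⟩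
      simp only [hxT, hyT, if_neg, if_false]
      exact hadj' x hxU' y hyU' hadj
  · -- potential bound
    have hmono : ∀ g : W, (U' ∩ S.image (g + ·)).card ≤ (U ∩ S.image (g + ·)).card :=
      fun g => Finset.card_le_card (Finset.inter_subset_inter Finset.sdiff_subset le_rfl)
    have hterm : ∀ g : W,
        (((U ∩ S.image (g + ·)).card : ℝ) - (U' ∩ S.image (g + ·)).card) / k
          ≤ Hm (U ∩ S.image (g + ·)).card - Hm (U' ∩ S.image (g + ·)).card := by
      intro g
      exact Hm_diff (hmono g) (hg0 g (Finset.mem_univ g)) hkpos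
    have hsum' : ∑ g : W, (U' ∩ S.image (g + ·)).card = U'.card * S.card := double_count S U'
    have hdiff : (∑ g : W, (((U ∩ S.image (g + ·)).card : ℝ)
        - (U' ∩ S.image (g + ·)).card)) / k = S.card := by
      rw [Finset.sum_sub_distrib]
      have e1 : (∑ g : W, ((U ∩ S.image (g + ·)).card : ℝ)) = (U.card * S.card : ℕ) := by
        rw [← hsum]; push_cast; rfl
      have e2 : (∑ g : W, ((U' ∩ S.image (g + ·)).card : ℝ)) = (U'.card * S.card : ℕ) := by
        rw [← hsum']; push_cast; rfl
      rw [e1, e2, hU'card]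
      have : ((U.card * S.card : ℕ) : ℝ) - (((U.card - k) * S.card : ℕ) : ℝ)
          = (k : ℝ) * S.card := by
        rw [Nat.cast_mul, Nat.cast_mul, Nat.cast_sub hkle]
        ring
      rw [this]
      field_simp
    have key : (S.card : ℝ) ≤ ∑ g : W, (Hm ((U ∩ S.image (g + ·)).card)
        - Hm ((U' ∩ S.image (g + ·)).card)) := by
      rw [← hdiff, Finset.sum_div]
      exact Finset.sum_le_sum fun g _ => hterm g
    rw [Finset.sum_sub_distrib] at key
    have hs : (0:ℝ) < S.card := by exact_mod_cast hspos
    have h3 : ((∑ g : W, Hm ((U' ∩ S.image (g + ·)).card)) + S.card) / S.card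
        ≤ (∑ g : W, Hm ((U ∩ S.image (g + ·)).card)) / S.card := by
      apply div_le_div_of_nonneg_right ?_ hs.le
      linarith
    rw [add_div, div_self (ne_of_gt hs)] at h3
    push_cast
    linarith

end cover

section indep
variable {V : Type*} [Fintype V] [DecidableEq V] (G : SimpleGraph V)

lemma indep_bddAbove :
    BddAbove {k : ℕ | ∃ s : Finset V, s.card = k ∧ ∀ u ∈ s, ∀ v ∈ s, ¬ G.Adj u v} := by
  refine ⟨Fintype.card V, fun k hk => ?_⟩
  obtain ⟨s, hs, -⟩ := hk
  rw [← hs]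
  exact s.card_le_univ

lemma card_le_indepNum {T : Finset V} (hT : ∀ u ∈ T, ∀ v ∈ T, ¬ G.Adj u v) :
    T.card ≤ indepNum G :=
  le_csSup (indep_bddAbove G) ⟨T, rfl, hT⟩

lemma exists_indep_finset :
    ∃ A : Finset V, A.card = indepNum G ∧ ∀ u ∈ A, ∀ v ∈ A, ¬ G.Adj u v := by
  have hne : {k : ℕ | ∃ s : Finset V, s.card = k ∧ ∀ u ∈ s, ∀ v ∈ s, ¬ G.Adj u v}.Nonempty :=
    ⟨0, ∅, rfl, by simp⟩
  have := Nat.sSup_mem hne (indep_bddAbove G)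
  obtain ⟨A, hA, hAi⟩ := this
  exact ⟨A, hA, hAi⟩

lemma one_le_indepNum [Nonempty V] : 1 ≤ indepNum G := by
  have := card_le_indepNum G (T := {Classical.arbitrary V}) ?_
  · simpa using this
  · intro u hu v hv
    simp only [Finset.mem_singleton] at hu hv
    subst hu; subst hv
    exact G.irrefl

lemma indep_card_orPow_le {n : ℕ} {T : Finset (Fin n → V)}
    (hT : ∀ u ∈ T, ∀ v ∈ T, ¬ (orPow G n).Adj u v) :
    T.card ≤ (indepNum G) ^ n := by
  have hsub : T ⊆ Fintype.piFinset (fun j => T.image (fun x => x j)) := by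
    intro x hx
    rw [Fintype.mem_piFinset]
    intro j
    exact Finset.mem_image_of_mem _ hx
  calc T.card ≤ (Fintype.piFinset (fun j => T.image (fun x => x j))).card :=
        Finset.card_le_card hsub
    _ = ∏ j : Fin n, (T.image (fun x => x j)).card := Fintype.card_piFinset _
    _ ≤ ∏ j : Fin n, indepNum G := by
        apply Finset.prod_le_prod' -- maybe wrong name
        intro j _
        apply card_le_indepNum
        intro a ha b hb hab
        obtain ⟨xa, hxa, rfl⟩ := Finset.mem_image.1 ha
        obtain ⟨xb, hxb, rfl⟩ := Finset.mem_image.1 hb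
        rcases eq_or_ne xa xb with rfl | hne
        · exact G.irrefl hab
        · exact hT xa hxa xb hxb ⟨hne, j, hab⟩
    _ = (indepNum G) ^ n := by simp

end indep

/-- Corollary 1: for the confusion graph `C` of a linear FICP over `F_q` with `K` scalar
messages, the optimal codebook size `|B| = χ(C^n)` for block length `n` satisfies
`(q^K / α(C))^n ≤ |B| ≤ (q^K / α(C))^n (1 + n log α(C))`. -/
theorem stmt_10 {F : Type*} [Field F] [Fintype F]
    (q K N : ℕ) (hq : Fintype.card F = q)
    (hc wc : Fin N → ℕ)
    (MH : ∀ i, Matrix (Fin K) (Fin (hc i)) F)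
    (MW : ∀ i, Matrix (Fin K) (Fin (wc i)) F)
    (C : SimpleGraph (Fin K → F))
    (hC : ∀ x x', C.Adj x x' ↔
      x ≠ x' ∧ ∃ i, x ᵥ* MH i = x' ᵥ* MH i ∧ x ᵥ* MW i ≠ x' ᵥ* MW i)
    (n B : ℕ)
    (hB : (orPow C n).chromaticNumber = (B : ℕ∞)) :
    ((q : ℝ) ^ K / (indepNum C : ℝ)) ^ n ≤ (B : ℝ) ∧
    (B : ℝ) ≤ ((q : ℝ) ^ K / (indepNum C : ℝ)) ^ n
        * (1 + (n : ℝ) * Real.log (indepNum C)) := by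
  classical
  set a := indepNum C with ha
  have ha1 : 1 ≤ a := one_le_indepNum C
  have hNcard : Fintype.card (Fin K → F) = q ^ K := by
    rw [Fintype.card_fun, hq, Fintype.card_fin]
  have hWcard : Fintype.card (Fin n → Fin K → F) = (q ^ K) ^ n := by
    rw [Fintype.card_fun, hNcard, Fintype.card_fin]
  -- translation invariance
  have hCinv : ∀ (z x y : Fin K → F), C.Adj (x + z) (y + z) → C.Adj x y := by
    intro z x y hadj
    rw [hC] at hadj
    obtain ⟨hne, i, hH, hWn⟩ := hadj
    rw [hC]
    refine ⟨fun h => hne (by rw [h]), i, ?_, ?_⟩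
    · rw [add_vecMul, add_vecMul] at hH
      exact add_right_cancel hH
    · intro h
      apply hWn
      rw [add_vecMul, add_vecMul, h]
  have hinv : ∀ (g u v : Fin n → Fin K → F),
      (orPow C n).Adj (u + g) (v + g) → (orPow C n).Adj u v := by
    rintro g u v ⟨hne, j, hadj⟩
    refine ⟨fun h => hne (by rw [h]), j, hCinv (g j) _ _ hadj⟩
  -- Colorable B
  have hcol : (orPow C n).Colorable B := by
    have h := (orPow C n).colorable_chromaticNumber_of_fintype
    rwa [hB, ENat.toNat_coe] at h
  -- lower bound
  have hlow : (q ^ K) ^ n ≤ B * a ^ n := by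
    obtain ⟨c⟩ := hcol
    have hpart : (Finset.univ : Finset (Fin n → Fin K → F)).card
        = ∑ i : Fin B, (Finset.univ.filter (fun v => c v = i)).card :=
      Finset.card_eq_sum_card_fiberwise (fun x _ => Finset.mem_univ (c x))
    have hfib : ∀ i : Fin B, (Finset.univ.filter (fun v => c v = i)).card ≤ a ^ n := by
      intro i
      apply indep_card_orPow_le
      intro u hu v hv hadj
      have hcu := (Finset.mem_filter.1 hu).2
      have hcv := (Finset.mem_filter.1 hv).2
      exact c.valid hadj (hcu.trans hcv.symm)
    calc (q ^ K) ^ n = (Finset.univ : Finset (Fin n → Fin K → F)).card := by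
          rw [Finset.card_univ, hWcard]
      _ = ∑ i : Fin B, (Finset.univ.filter (fun v => c v = i)).card := hpart
      _ ≤ ∑ _i : Fin B, a ^ n := Finset.sum_le_sum fun i _ => hfib i
      _ = B * a ^ n := by rw [Finset.sum_const, Finset.card_univ, Fintype.card_fin, smul_eq_mul]
  have hapos : (0:ℝ) < (a:ℝ) := by exact_mod_cast ha1
  have hapown : (0:ℝ) < (a:ℝ) ^ n := by positivity
  constructor
  · rw [div_pow, div_le_iff₀ hapown]
    have : ((q:ℝ) ^ K) ^ n = (((q ^ K) ^ n : ℕ) : ℝ) := by push_cast; ring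
    rw [this]
    have : (B:ℝ) * (a:ℝ) ^ n = ((B * a ^ n : ℕ) : ℝ) := by push_cast; ring
    rw [this]
    exact_mod_cast hlow
  · -- upper bound via covering
    obtain ⟨A, hAcard, hAind⟩ := exists_indep_finset C
    set S : Finset (Fin n → Fin K → F) := Fintype.piFinset (fun _ : Fin n => A) with hS
    have hScard : S.card = a ^ n := by
      rw [hS, Fintype.card_piFinset]
      simp [hAcard, ha]
    have hSne : S.Nonempty := by
      rw [← Finset.card_pos, hScard]
      exact Nat.pow_pos (by omega) |>.trans_le le_rfl
    have hSind : ∀ u ∈ S, ∀ v ∈ S, ¬ (orPow C n).Adj u v := by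
      rintro u hu v hv ⟨hne, j, hadj⟩
      rw [hS, Fintype.mem_piFinset] at hu hv
      exact hAind _ (hu j) _ (hv j) hadj
    obtain ⟨t, col, hlt, hadjcol, hpot⟩ :=
      cover_aux (orPow C n) hinv S hSne hSind Finset.univ
    -- B ≤ t
    have hBt : B ≤ t := by
      have hcolt : (orPow C n).Colorable t := by
        refine ⟨SimpleGraph.Coloring.mk (fun v => (⟨col v, hlt v (Finset.mem_univ v)⟩ : Fin t))
          (fun {u v} hadj hEq => ?_)⟩
        exact hadjcol u (Finset.mem_univ u) v (Finset.mem_univ v) hadj (congrArg Fin.val hEq)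
      have := hcolt.chromaticNumber_le
      rw [hB] at this
      exact_mod_cast this
    -- evaluate the potential at univ
    have htrans : ∀ g : Fin n → Fin K → F, (S.image (g + ·)).card = S.card := by
      intro g
      exact Finset.card_image_of_injective _ (add_right_injective g)
    have hpot2 : (t : ℝ) ≤ ((q ^ K) ^ n : ℕ) * Hm (a ^ n) / (a ^ n : ℕ) := by
      calc (t:ℝ) ≤ (∑ g : Fin n → Fin K → F, Hm ((Finset.univ ∩ S.image (g + ·)).card))
            / S.card := hpot
        _ = ((q ^ K) ^ n : ℕ) * Hm (a ^ n) / (a ^ n : ℕ) := by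
            have : ∀ g : Fin n → Fin K → F,
                (Finset.univ ∩ S.image (g + ·)).card = a ^ n := by
              intro g
              rw [Finset.univ_inter, htrans g, hScard]
            simp only [this]
            rw [Finset.sum_const, Finset.card_univ, hWcard, hScard, nsmul_eq_mul]
    have hHm : Hm (a ^ n) ≤ 1 + (n:ℝ) * Real.log a := by
      have h1 : 1 ≤ a ^ n := Nat.one_le_pow n a (by omega)
      have := Hm_le_log h1
      rwa [Nat.cast_pow, Real.log_pow] at this
    have hMs : (((q ^ K) ^ n : ℕ) : ℝ) / ((a ^ n : ℕ) : ℝ) = ((q:ℝ) ^ K / (a:ℝ)) ^ n := by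
      push_cast
      rw [div_pow]
    have hHmnn : 0 ≤ Hm (a ^ n) := Hm_nonneg _
    calc (B:ℝ) ≤ (t:ℝ) := by exact_mod_cast hBt
      _ ≤ ((q ^ K) ^ n : ℕ) * Hm (a ^ n) / ((a ^ n : ℕ) : ℝ) := hpot2
      _ = (((q ^ K) ^ n : ℕ) : ℝ) / ((a ^ n : ℕ) : ℝ) * Hm (a ^ n) := by ring
      _ ≤ (((q ^ K) ^ n : ℕ) : ℝ) / ((a ^ n : ℕ) : ℝ) * (1 + (n:ℝ) * Real.log a) := by
          apply mul_le_mul_of_nonneg_left hHm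
          positivity
      _ = ((q:ℝ) ^ K / (a:ℝ)) ^ n * (1 + (n:ℝ) * Real.log a) := by rw [hMs]
end

section
/- Theorem 2: An encoding map M : F_q^{nK} → F_q^L is a δ-error-correcting functional index code for the FICP F(X,R) (i.e., there exist decoding functions D_i with D_i(M(x) + ε, H_i(x)) = W_i(x) for all i ∈ [N], all x ∈ F_q^{nK}, and all error vectors ε ∈ F_q^L with Hamming weight wt(ε) ≤ δ) if and only if for every confusable pair x, x' ∈ F_q^{nK}, the Hamming weight of M(x) − M(x') is at least 2δ + 1. -/
/-!
A receiver holding side information `s` can decode `y` to the wanted value of any message with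
side information `s` whose codeword lies within distance `δ` of `y`. This is well defined exactly
when no two confusable messages have codewords within distance `2δ`: if they had, a word halfway
between the two codewords would be a corruption of both by at most `δ` errors, and otherwise the
triangle inequality forces every candidate message to have the same wanted value.
-/

open Finset

section Hamming

variable {ι : Type*} [Fintype ι] {β : ι → Type*} [∀ i, DecidableEq (β i)]

theorem exists_hammingDist_le_of_hammingDist_le_add {u v : ∀ i, β i} {a b : ℕ}
    (huv : hammingDist u v ≤ a + b) : ∃ w, hammingDist u w ≤ a ∧ hammingDist w v ≤ b := by
  classical
  set s : Finset ι := {i | u i ≠ v i}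
  obtain ⟨t, hts, ht⟩ := exists_subset_card_eq (min_le_left #s a)
  -- `w` follows `v` on `t` and `u` elsewhere, so it differs from `u` only on `t`
  -- and from `v` only on `s \ t`
  refine ⟨fun i => if i ∈ t then v i else u i, ?_, ?_⟩
  · calc hammingDist u _ ≤ #t := card_le_card fun i hi => by
          by_contra hit
          simp [hit] at hi
      _ ≤ a := ht ▸ min_le_right _ _
  · have hsdiff : #(s \ t) ≤ b := by
      have : #s = hammingDist u v := rfl
      rw [card_sdiff_of_subset hts]
      omega
    refine le_trans (card_le_card fun i hi => ?_) hsdiff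
    by_cases hit : i ∈ t
    · simp [hit] at hi
    · simpa [s, hit] using hi

theorem hammingDist_eq_hammingNorm_sub [∀ i, AddGroup (β i)] (x y : ∀ i, β i) :
    hammingDist x y = hammingNorm (x - y) := by
  simp_rw [hammingNorm, hammingDist, Pi.sub_apply, ne_eq, sub_eq_zero]

theorem forall_add_hammingNorm_le_iff [∀ i, AddCommGroup (β i)] {P : (∀ i, β i) → Prop}
    {u : ∀ i, β i} {δ : ℕ} :
    (∀ ε, hammingNorm ε ≤ δ → P (u + ε)) ↔ ∀ y, hammingDist y u ≤ δ → P y := by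
  refine ⟨fun h y hy => ?_, fun h ε hε => h _ ?_⟩
  · simpa using h (y - u) (by rwa [← hammingDist_eq_hammingNorm_sub])
  · rwa [hammingDist_eq_hammingNorm_sub, add_sub_cancel_left]

variable {X S T : Type*} (M : X → ∀ i, β i) (side : X → S) (want : X → T) (δ : ℕ)

theorem exists_decoder_iff_hammingDist [Nonempty X] :
    (∃ D : (∀ i, β i) → S → T, ∀ x y, hammingDist y (M x) ≤ δ → D y (side x) = want x) ↔
      ∀ x x', side x = side x' → want x ≠ want x' → 2 * δ + 1 ≤ hammingDist (M x) (M x') := by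
  constructor
  · rintro ⟨D, hD⟩ x x' hside hwant
    by_contra! hdist
    obtain ⟨y, hxy, hyx'⟩ :=
      exists_hammingDist_le_of_hammingDist_le_add (u := M x) (v := M x') (a := δ) (b := δ)
        (by omega)
    refine hwant ?_
    rw [← hD x y (by rwa [hammingDist_comm]), ← hD x' y hyx', hside]
  · intro hsep
    refine ⟨fun y s => want (Classical.epsilon fun x => side x = s ∧ hammingDist y (M x) ≤ δ),
      fun x y hxy => ?_⟩
    set z := Classical.epsilon fun z => side z = side x ∧ hammingDist y (M z) ≤ δ
    obtain ⟨hside, hyz⟩ : side z = side x ∧ hammingDist y (M z) ≤ δ :=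
      Classical.epsilon_spec (p := fun z => side z = side x ∧ hammingDist y (M z) ≤ δ)
        ⟨x, rfl, hxy⟩
    by_contra hwant
    have hfar := hsep z x hside hwant
    have hclose := hammingDist_triangle_left (M z) (M x) y
    omega

theorem exists_decoder_iff_hammingNorm [∀ i, AddCommGroup (β i)] [Nonempty X] :
    (∃ D : (∀ i, β i) → S → T,
        ∀ x ε, hammingNorm ε ≤ δ → D (M x + ε) (side x) = want x) ↔
      ∀ x x', side x = side x' → want x ≠ want x' → 2 * δ + 1 ≤ hammingNorm (M x - M x') := by
  refine (exists_congr fun (D : (∀ i, β i) → S → T) => forall_congr' fun x =>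
    forall_add_hammingNorm_le_iff (P := fun y => D y (side x) = want x)).trans ?_
  rw [exists_decoder_iff_hammingDist]
  simp only [hammingDist_eq_hammingNorm_sub]

end Hamming

theorem stmt_12_general {F : Type*} [Field F] [DecidableEq F]
    (n K N L δ : ℕ) (hsz wsz : Fin N → ℕ)
    (H : ∀ i, Fin (hsz i) → (Fin (n * K) → F) → Fin n → F)
    (W : ∀ i, Fin (wsz i) → (Fin (n * K) → F) → Fin n → F)
    (M : (Fin (n * K) → F) → Fin L → F) :
    (∃ D : ∀ i, (Fin L → F) → (Fin (hsz i) → Fin n → F) → Fin (wsz i) → Fin n → F,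
        ∀ (i : Fin N) (x : Fin (n * K) → F) (ε : Fin L → F), hammingNorm ε ≤ δ →
          D i (M x + ε) (fun j => H i j x) = fun l => W i l x)
    ↔ (∀ x x' : Fin (n * K) → F, x ≠ x' →
        (∃ i, (∀ j, H i j x = H i j x') ∧ ∃ l, W i l x ≠ W i l x') →
        2 * δ + 1 ≤ hammingNorm (M x - M x')) := by
  have receiver (i : Fin N) :=
    exists_decoder_iff_hammingNorm M (fun x j => H i j x) (fun x l => W i l x) δ
  constructor
  · rintro ⟨D, hD⟩ x x' - ⟨i, hH, l, hW⟩
    exact (receiver i).mp ⟨D i, hD i⟩ x x' (funext hH) fun h => hW (congrFun h l)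
  · intro hconf
    choose D hD using fun i => (receiver i).mpr fun x x' hH hW =>
      hconf x x' (ne_of_apply_ne (fun x l => W i l x) hW) ⟨i, congrFun hH, Function.ne_iff.mp hW⟩
    exact ⟨D, hD⟩

/-- Theorem 2: an encoding map `M` is a `δ`-error-correcting functional index code iff the
Hamming weight of `M x - M x'` is at least `2δ + 1` for every confusable pair `x, x'`. -/
theorem stmt_12 {F : Type*} [Field F] [Fintype F] [DecidableEq F]
    (n K N L δ : ℕ) (hsz wsz : Fin N → ℕ)
    (H : ∀ i, Fin (hsz i) → (Fin (n * K) → F) → Fin n → F)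
    (W : ∀ i, Fin (wsz i) → (Fin (n * K) → F) → Fin n → F)
    (M : (Fin (n * K) → F) → Fin L → F) :
    (∃ D : ∀ i, (Fin L → F) → (Fin (hsz i) → Fin n → F) → Fin (wsz i) → Fin n → F,
        ∀ (i : Fin N) (x : Fin (n * K) → F) (ε : Fin L → F), hammingNorm ε ≤ δ →
          D i (M x + ε) (fun j => H i j x) = fun l => W i l x)
    ↔ (∀ x x' : Fin (n * K) → F, x ≠ x' →
        (∃ i, (∀ j, H i j x = H i j x') ∧ ∃ l, W i l x ≠ W i l x') →
        2 * δ + 1 ≤ hammingNorm (M x - M x')) :=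
  stmt_12_general n K N L δ hsz wsz H W M
end

section
/- Corollary 4: For a linear functional index coding problem over F_q (receiver R_i's side information is xM_{H_i} and demand is xM_{W_i}), a matrix M ∈ F_q^{nK × L} gives a δ-error-correcting functional index code x ↦ xM if and only if wt(xM) ≥ 2δ + 1 for every x ∈ ∪_{i∈[N]} { s ∈ F_q^{nK} : sM_{H_i} = 0 and sM_{W_i} ≠ 0 }. -/
/-!
With side information `H x` fixed, a decoder fails exactly when some received word lies within
`δ` of two codewords `C x`, `C x'` with `H x = H x'` but `W x ≠ W x'`. Hamming space is geodesic
(two words at distance `≤ 2δ` have a common point within `δ` of both), so decodability means such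
codewords are at distance `≥ 2δ + 1`; for a linear code this distance is the weight of `C (x' - x)`.
-/

open Matrix

theorem exists_hammingDist_le_of_hammingDist_le_add_s14 {ι : Type*} {β : ι → Type*} [Fintype ι]
    [∀ i, DecidableEq (β i)] {x y : ∀ i, β i} {a b : ℕ} (h : hammingDist x y ≤ a + b) :
    ∃ z, hammingDist x z ≤ a ∧ hammingDist z y ≤ b := by
  classical
  set s := Finset.univ.filter fun i => x i ≠ y i
  obtain ⟨t, hts, ht⟩ := Finset.exists_subset_card_eq (min_le_left s.card a)
  refine ⟨fun i => if i ∈ t then y i else x i, ?_, ?_⟩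
  · have hxz : (Finset.univ.filter fun i => x i ≠ if i ∈ t then y i else x i) = t := by
      ext i
      by_cases hi : i ∈ t
      · simpa [hi] using (Finset.mem_filter.mp (hts hi)).2
      · simp [hi]
    rw [hammingDist, hxz, ht]
    exact min_le_right _ _
  · have hzy : (Finset.univ.filter fun i => (if i ∈ t then y i else x i) ≠ y i) = s \ t := by
      ext i
      by_cases hi : i ∈ t <;> simp [s, hi]
    rw [hammingDist, hzy, Finset.card_sdiff_of_subset hts, ht]
    change s.card ≤ a + b at h
    omega

section Decoding

variable {V ι β A B : Type*} [Fintype ι] [DecidableEq β]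

theorem exists_decoder_iff_forall_hammingDist_ge [Nonempty V]
    (C : V → ι → β) (H : V → A) (W : V → B) (δ : ℕ) :
    (∃ D : (ι → β) → A → B, ∀ x y, hammingDist y (C x) ≤ δ → D y (H x) = W x) ↔
      ∀ x x', H x = H x' → W x ≠ W x' → 2 * δ + 1 ≤ hammingDist (C x) (C x') := by
  constructor
  · rintro ⟨D, hD⟩ x x' hH hW
    by_contra! hlt
    obtain ⟨y, hxy, hyx'⟩ := exists_hammingDist_le_of_hammingDist_le_add_s14
      (x := C x) (y := C x') (a := δ) (b := δ) (by omega)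
    rw [hammingDist_comm] at hxy
    exact hW ((hD x y hxy).symm.trans (hH ▸ hD x' y hyx'))
  · intro hsep
    refine ⟨fun y h => W (Classical.epsilon fun x => H x = h ∧ hammingDist y (C x) ≤ δ), ?_⟩
    intro x y hxy
    set x' := Classical.epsilon fun x' => H x' = H x ∧ hammingDist y (C x') ≤ δ
    obtain ⟨hH, hyx'⟩ : H x' = H x ∧ hammingDist y (C x') ≤ δ :=
      Classical.epsilon_spec (p := fun x' => H x' = H x ∧ hammingDist y (C x') ≤ δ)
        ⟨x, rfl, hxy⟩
    by_contra hW
    have := hsep x' x hH hW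
    have := hammingDist_triangle_left (C x') (C x) y
    omega

theorem forall_hammingDist_ge_iff_forall_hammingNorm_ge [AddGroup V] [AddGroup β] [AddGroup A]
    [AddGroup B] (C : V →+ ι → β) (H : V →+ A) (W : V →+ B) (δ : ℕ) :
    (∀ x x', H x = H x' → W x ≠ W x' → 2 * δ + 1 ≤ hammingDist (C x) (C x')) ↔
      ∀ s, H s = 0 → W s ≠ 0 → 2 * δ + 1 ≤ hammingNorm (C s) := by
  constructor
  · intro hsep s hH hW
    simpa [hammingDist_zero_right] using hsep s 0 (by simpa using hH) (by simpa using hW)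
  · intro hwt x x' hH hW
    rw [hammingDist_eq_hammingNorm, ← map_neg, ← map_add]
    exact hwt _ (by rw [map_add, map_neg, hH, neg_add_cancel])
      (by rwa [map_add, map_neg, ne_eq, neg_add_eq_zero])

theorem forall_hammingNorm_le_add_iff [AddGroup β] (c : ι → β) (δ : ℕ) (P : (ι → β) → Prop) :
    (∀ ε, hammingNorm ε ≤ δ → P (c + ε)) ↔ ∀ y, hammingDist y c ≤ δ → P y := by
  constructor
  · intro h y hy
    simpa using h (-c + y) (by rwa [← hammingDist_eq_hammingNorm, hammingDist_comm])
  · intro h ε hε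
    exact h _ (by rwa [hammingDist_comm, hammingDist_eq_hammingNorm, neg_add_cancel_left])

theorem exists_decoder_iff_forall_hammingNorm_ge [AddGroup V] [AddGroup β] [AddGroup A]
    [AddGroup B] (C : V →+ ι → β) (H : V →+ A) (W : V →+ B) (δ : ℕ) :
    (∃ D : (ι → β) → A → B, ∀ x ε, hammingNorm ε ≤ δ → D (C x + ε) (H x) = W x) ↔
      ∀ s, H s = 0 → W s ≠ 0 → 2 * δ + 1 ≤ hammingNorm (C s) := by
  have hball (D : (ι → β) → A → B) :
      (∀ x ε, hammingNorm ε ≤ δ → D (C x + ε) (H x) = W x) ↔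
        ∀ x y, hammingDist y (C x) ≤ δ → D y (H x) = W x :=
    forall_congr' fun x => forall_hammingNorm_le_add_iff (C x) δ fun y => D y (H x) = W x
  rw [exists_congr hball, exists_decoder_iff_forall_hammingDist_ge,
    forall_hammingDist_ge_iff_forall_hammingNorm_ge]

end Decoding

theorem stmt_14_general {F : Type*} [Field F] [DecidableEq F]
    (n K N L δ : ℕ) (hc wc : Fin N → ℕ)
    (MH : ∀ i, Matrix (Fin (n * K)) (Fin (hc i)) F)
    (MW : ∀ i, Matrix (Fin (n * K)) (Fin (wc i)) F)
    (M : Matrix (Fin (n * K)) (Fin L) F) :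
    (∃ D : ∀ i, (Fin L → F) → (Fin (hc i) → F) → Fin (wc i) → F,
        ∀ (i : Fin N) (x : Fin (n * K) → F) (ε : Fin L → F), hammingNorm ε ≤ δ →
          D i (x ᵥ* M + ε) (x ᵥ* MH i) = x ᵥ* MW i)
    ↔ (∀ x ∈ ⋃ i, {s : Fin (n * K) → F | s ᵥ* MH i = 0 ∧ s ᵥ* MW i ≠ 0},
        2 * δ + 1 ≤ hammingNorm (x ᵥ* M)) := by
  simp only [Set.mem_iUnion, Set.mem_ofPred_eq, forall_exists_index, and_imp]
  rw [forall_comm]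
  exact Classical.skolem.symm.trans <| forall_congr' fun i =>
    exists_decoder_iff_forall_hammingNorm_ge (vecMulLinear M).toAddMonoidHom
      (vecMulLinear (MH i)).toAddMonoidHom (vecMulLinear (MW i)).toAddMonoidHom δ

/-- Corollary 4: for a linear FICP, a matrix `M` gives a `δ`-error-correcting functional index
code `x ↦ x·M` iff `wt(x·M) ≥ 2δ + 1` for every `x` in the union of the sets
`{s : s·M_{H_i} = 0, s·M_{W_i} ≠ 0}`. -/
theorem stmt_14 {F : Type*} [Field F] [Fintype F] [DecidableEq F]
    (n K N L δ : ℕ) (hc wc : Fin N → ℕ)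
    (MH : ∀ i, Matrix (Fin (n * K)) (Fin (hc i)) F)
    (MW : ∀ i, Matrix (Fin (n * K)) (Fin (wc i)) F)
    (M : Matrix (Fin (n * K)) (Fin L) F) :
    (∃ D : ∀ i, (Fin L → F) → (Fin (hc i) → F) → Fin (wc i) → F,
        ∀ (i : Fin N) (x : Fin (n * K) → F) (ε : Fin L → F), hammingNorm ε ≤ δ →
          D i (x ᵥ* M + ε) (x ᵥ* MH i) = x ᵥ* MW i)
    ↔ (∀ x ∈ ⋃ i, {s : Fin (n * K) → F | s ᵥ* MH i = 0 ∧ s ᵥ* MW i ≠ 0},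
        2 * δ + 1 ≤ hammingNorm (x ᵥ* M)) :=
  stmt_14_general n K N L δ hc wc MH MW M
end
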